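/- Let (Ω, ℱ, P) be a probability space, X₀ and Z integrable ℝᵈ-valued random vectors, s ∈ [0, 1), X_s = (1 − s)·X₀ + s·Z, and t = arctan(s / (1 − s)). Then, almost surely, E[ cos(t)·Z − sin(t)·X₀ | σ(X_s) ] = (1/√(s² + (1 − s)²)) · [ (1 − 2s)·X_s + (1 − 2s + 2s²)·E[ Z − X₀ | σ(X_s) ] ]. Consequently, the conditional-expectation-optimal TrigFlow predictor is obtained losslessly from the conditional-expectation-optimal flow-matching predictor by the stated affine output transformation. -/

import Mathlib

open Real MeasureTheory

/-- Let `(Ω, ℱ, P)` be a probability space, `X₀` and `Z` integrable `ℝᵈ`-valued random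
vectors, `s ∈ [0, 1)`, `Xs = (1 − s)·X₀ + s·Z`, and `t = arctan (s / (1 − s))`. Then,
almost surely,
`E[cos(t)·Z − sin(t)·X₀ | σ(Xs)] = (1/√(s² + (1 − s)²)) ·
  [(1 − 2s)·Xs + (1 − 2s + 2s²)·E[Z − X₀ | σ(Xs)]]`. -/
theorem condexp_trig_target_eq_transformed_condexp_flow_target
    {Ω : Type*} [MeasurableSpace Ω] (μ : Measure Ω) [IsProbabilityMeasure μ]
    {d : ℕ} (X₀ Z : Ω → EuclideanSpace ℝ (Fin d))
    (hX₀m : Measurable X₀) (hZm : Measurable Z)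
    (hX₀ : Integrable X₀ μ) (hZ : Integrable Z μ)
    (s : ℝ) (hs : s ∈ Set.Ico (0 : ℝ) 1)
    (Xs : Ω → EuclideanSpace ℝ (Fin d)) (hXs : Xs = fun ω => (1 - s) • X₀ ω + s • Z ω)
    (t : ℝ) (ht : t = arctan (s / (1 - s)))
    (m : MeasurableSpace Ω) (hm : m = MeasurableSpace.comap Xs inferInstance) :
    μ[fun ω => cos t • Z ω - sin t • X₀ ω | m] =ᵐ[μ]
      fun ω => (1 / Real.sqrt (s ^ 2 + (1 - s) ^ 2)) •
        ((1 - 2 * s) • Xs ω +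
          (1 - 2 * s + 2 * s ^ 2) • (μ[fun ω => Z ω - X₀ ω | m]) ω) := by
  rename_i m0 hprob
  obtain ⟨hs0, hs1⟩ := hs
  have h1s : (0:ℝ) < 1 - s := by linarith
  set c : ℝ := 1 / Real.sqrt (s ^ 2 + (1 - s) ^ 2) with hc
  have hpos : (0:ℝ) < s ^ 2 + (1 - s) ^ 2 := by positivity
  have hsqrt : 0 < Real.sqrt (s ^ 2 + (1 - s) ^ 2) := Real.sqrt_pos.2 hpos
  have hkey : Real.sqrt (1 + (s / (1 - s)) ^ 2)
      = Real.sqrt (s ^ 2 + (1 - s) ^ 2) / (1 - s) := by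
    have harg : 1 + (s / (1 - s)) ^ 2 = (s ^ 2 + (1 - s) ^ 2) / (1 - s) ^ 2 := by
      field_simp; ring
    rw [harg, Real.sqrt_div hpos.le, Real.sqrt_sq h1s.le]
  have hcos : Real.cos t = (1 - s) * c := by
    rw [ht, Real.cos_arctan, hkey, hc]
    field_simp
  have hsin : Real.sin t = s * c := by
    rw [ht, Real.sin_arctan, hkey, hc]
    field_simp
  have hXsm : Measurable[m0] Xs := by
    rw [hXs]
    exact (hX₀m.const_smul (1 - s)).add (hZm.const_smul s)
  have hm_le : m ≤ m0 := by
    rw [hm]; exact hXsm.comap_le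
  haveI : SigmaFinite (μ.trim hm_le) := by
    infer_instance
  have hXs_sm : StronglyMeasurable[m] Xs := by
    have : Measurable[m] Xs := by
      rw [hm]; exact Measurable.of_comap_le le_rfl
    exact this.stronglyMeasurable
  have hXs_int : Integrable Xs μ := by
    rw [hXs]
    exact ((hX₀.smul (1 - s)).add (hZ.smul s))
  have hg_int : Integrable (fun ω => Z ω - X₀ ω) μ := hZ.sub hX₀
  -- pointwise rewrite of the target
  have hfun : (fun ω => cos t • Z ω - sin t • X₀ ω)
      = c • ((1 - 2 * s) • Xs + (1 - 2 * s + 2 * s ^ 2) • fun ω => Z ω - X₀ ω) := by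
    funext ω
    simp only [Pi.smul_apply, Pi.add_apply, hXs, hcos, hsin]
    module
  rw [hfun]
  have h1 := condExp_smul (μ := μ) (m := m) c
    ((1 - 2 * s) • Xs + (1 - 2 * s + 2 * s ^ 2) • fun ω => Z ω - X₀ ω)
  refine h1.trans ?_
  have hA_int : Integrable ((1 - 2 * s) • Xs) μ := hXs_int.smul _
  have hB_int : Integrable ((1 - 2 * s + 2 * s ^ 2) • fun ω => Z ω - X₀ ω) μ :=
    hg_int.smul _
  have h2 := condExp_add (μ := μ) (m := m) hA_int hB_int
  have h3 : μ[(1 - 2 * s) • Xs | m] = (1 - 2 * s) • Xs :=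
    condExp_of_stronglyMeasurable hm_le (hXs_sm.const_smul _) hA_int
  have h4 := condExp_smul (μ := μ) (m := m) (1 - 2 * s + 2 * s ^ 2)
    (fun ω => Z ω - X₀ ω)
  filter_upwards [h2, h4] with ω h2ω h4ω
  simp only [Pi.smul_apply, Pi.add_apply] at *
  rw [h2ω, h3, h4ω]
  rfl
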